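/- In Y_{m|n}[[u^{-1}]] the relations e_i(u − (−1)^{|i|}) d_i(u) = d_i(u) e_i(u) and e_i(u + (−1)^{|i+1|}) d_{i+1}(u) = d_{i+1}(u) e_i(u) hold for all 1 ≤ i ≤ m+n−1. -/

import Mathlib

noncomputable def inU {A : Type*} [Semiring A] (f : ℕ → A) : MvPowerSeries (Fin 2) A :=
  fun d => if d 1 = 0 then f (d 0) else 0

noncomputable def inV {A : Type*} [Semiring A] (f : ℕ → A) : MvPowerSeries (Fin 2) A :=
  fun d => if d 0 = 0 then f (d 1) else 0

noncomputable def cf2 {A : Type*} [Semiring A] (F : MvPowerSeries (Fin 2) A) (a b : ℕ) : A :=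
  MvPowerSeries.coeff (Finsupp.single 0 a + Finsupp.single 1 b) F

/-- the coefficients of g(u−c): the coefficient of u^{-n} in Σ_r (f r)(u−c)^{-r}. -/
noncomputable def shf {A : Type*} [Ring A] (c : ℤ) (f : ℕ → A) : ℕ → A :=
  fun n => ∑ r ∈ Finset.range (n+1), ((Nat.choose (n-1) (n-r) : ℤ) * c ^ (n-r)) • f r

def pnat (m i : ℕ) : ℕ := if i ≤ m then 0 else 1

def ww (c : ℤ) (s b : ℕ) : ℤ :=
  if b ≤ s then (Nat.choose (s-1) (s-b) : ℤ) * c ^ (s-b) else 0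

lemma shf_eq {A : Type*} [Ring A] (c : ℤ) (f : ℕ → A) (n : ℕ) :
    shf c f n = ∑ r ∈ Finset.range (n+1), ww c n r • f r := by
  unfold shf ww
  refine Finset.sum_congr rfl fun r hr => ?_
  rw [if_pos (by simpa [Nat.lt_succ_iff] using Finset.mem_range.mp hr)]

lemma ww_zero (c : ℤ) (s : ℕ) (h : 1 ≤ s) : ww c s 0 = 0 := by
  unfold ww
  rw [if_pos (Nat.zero_le _)]
  have h0 : (s - 1).choose (s - 0) = 0 := Nat.choose_eq_zero_of_lt (by omega)
  rw [h0]
  simp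

lemma ww_diag (c : ℤ) (s : ℕ) : ww c s s = 1 := by
  unfold ww; simp

lemma ww_gt (c : ℤ) (s b : ℕ) (h : s < b) : ww c s b = 0 := by
  unfold ww; rw [if_neg (by omega)]

lemma ww_succ (c : ℤ) (s b : ℕ) (h1 : 1 ≤ b) (h2 : b ≤ s + 1) :
    ww c (s+1) b = ww c s (b-1) + c * ww c s b := by
  obtain ⟨b', rfl⟩ : ∃ b', b = b' + 1 := ⟨b - 1, by omega⟩
  rcases Nat.lt_or_ge s (b' + 1) with h | h
  · obtain rfl : b' = s := by omega
    have e : b' + 1 - 1 = b' := rfl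
    rw [ww_diag, e, ww_gt c b' (b'+1) (by omega), ww_diag]
    ring
  · obtain ⟨t, rfl⟩ : ∃ t, s = t + 1 := ⟨s - 1, by omega⟩
    unfold ww
    rw [if_pos (by omega), if_pos (by omega), if_pos (by omega)]
    have e1 : t + 1 + 1 - (b' + 1) = (t - b') + 1 := by omega
    have e2 : t + 1 - (b' + 1 - 1) = (t - b') + 1 := by omega
    have e3 : t + 1 + 1 - 1 = t + 1 := by omega
    have e4 : t + 1 - 1 = t := by omega
    have e5 : t + 1 - (b' + 1) = t - b' := by omega
    rw [e1, e2, e3, e4, e5, Nat.choose_succ_succ']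
    push_cast
    ring

lemma fin2_single0 (p : Fin 2 →₀ ℕ) (h : p 1 = 0) : p = Finsupp.single 0 (p 0) := by
  ext x
  fin_cases x <;> simp [h, Finsupp.single_apply]

lemma fin2_single1 (p : Fin 2 →₀ ℕ) (h : p 0 = 0) : p = Finsupp.single 1 (p 1) := by
  ext x
  fin_cases x <;> simp [h, Finsupp.single_apply]

lemma sab0 (a b : ℕ) :
    ((Finsupp.single (0 : Fin 2) a + Finsupp.single (1 : Fin 2) b : (Fin 2) →₀ ℕ)) 0 = a := by
  simp [Finsupp.single_apply]

lemma sab1 (a b : ℕ) :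
    ((Finsupp.single (0 : Fin 2) a + Finsupp.single (1 : Fin 2) b : (Fin 2) →₀ ℕ)) 1 = b := by
  simp [Finsupp.single_apply]

lemma cf2_UV {A : Type*} [Semiring A] (f g : ℕ → A) (a b : ℕ) :
    cf2 (inU f * inV g) a b = f a * g b := by
  unfold cf2
  rw [MvPowerSeries.coeff_mul]
  rw [Finset.sum_eq_single (Finsupp.single (0 : Fin 2) a, Finsupp.single (1 : Fin 2) b)]
  · simp [inU, inV, MvPowerSeries.coeff_apply, Finsupp.single_apply]
  · rintro ⟨p, q⟩ hmem hne
    rw [Finset.HasAntidiagonal.mem_antidiagonal] at hmem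
    simp only [MvPowerSeries.coeff_apply, inU, inV]
    by_cases h1 : p 1 = 0
    · by_cases h2 : q 0 = 0
      · exfalso
        apply hne
        have e0 : p 0 + q 0 = a := by
          have := DFunLike.congr_fun hmem (0 : Fin 2)
          simpa [sab0] using this
        have e1 : p 1 + q 1 = b := by
          have := DFunLike.congr_fun hmem (1 : Fin 2)
          simpa [sab1] using this
        have hp : p = Finsupp.single 0 (p 0) := fin2_single0 p h1
        have hq : q = Finsupp.single 1 (q 1) := fin2_single1 q h2
        have hpa : p 0 = a := by omega
        have hqb : q 1 = b := by omega
        rw [Prod.mk.injEq]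
        constructor
        · rw [hp, hpa]
        · rw [hq, hqb]
      · rw [if_neg h2, mul_zero]
    · rw [if_neg h1, zero_mul]
  · intro hmem
    exfalso
    apply hmem
    rw [Finset.HasAntidiagonal.mem_antidiagonal]

lemma cf2_VU {A : Type*} [Semiring A] (f g : ℕ → A) (a b : ℕ) :
    cf2 (inV g * inU f) a b = g b * f a := by
  unfold cf2
  rw [MvPowerSeries.coeff_mul]
  rw [Finset.sum_eq_single (Finsupp.single (1 : Fin 2) b, Finsupp.single (0 : Fin 2) a)]
  · simp [inU, inV, MvPowerSeries.coeff_apply, Finsupp.single_apply]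
  · rintro ⟨p, q⟩ hmem hne
    rw [Finset.HasAntidiagonal.mem_antidiagonal] at hmem
    simp only [MvPowerSeries.coeff_apply, inU, inV]
    by_cases h1 : p 0 = 0
    · by_cases h2 : q 1 = 0
      · exfalso
        apply hne
        have e0 : p 0 + q 0 = a := by
          have := DFunLike.congr_fun hmem (0 : Fin 2)
          simpa [sab0] using this
        have e1 : p 1 + q 1 = b := by
          have := DFunLike.congr_fun hmem (1 : Fin 2)
          simpa [sab1] using this
        have hp : p = Finsupp.single 1 (p 1) := fin2_single1 p h1
        have hq : q = Finsupp.single 0 (q 0) := fin2_single0 q h2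
        have hpb : p 1 = b := by omega
        have hqa : q 0 = a := by omega
        rw [Prod.mk.injEq]
        constructor
        · rw [hp, hpb]
        · rw [hq, hqa]
      · rw [if_neg h2, mul_zero]
    · rw [if_neg h1, zero_mul]
  · intro hmem
    exfalso
    apply hmem
    rw [Finset.HasAntidiagonal.mem_antidiagonal]
    exact add_comm _ _

lemma cf2_UU {A : Type*} [Semiring A] (f g : ℕ → A) (a b : ℕ) :
    cf2 (inU f * inU g) a b =
      if b = 0 then ∑ j ∈ Finset.range (a+1), f j * g (a-j) else 0 := by
  unfold cf2
  rw [MvPowerSeries.coeff_mul]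
  by_cases hb : b = 0
  · subst hb
    rw [if_pos rfl]
    refine Finset.sum_nbij' (fun pq => pq.1 0) (fun j => (Finsupp.single 0 j, Finsupp.single 0 (a - j))) ?_ ?_ ?_ ?_ ?_
    · rintro ⟨p, q⟩ hmem
      rw [Finset.HasAntidiagonal.mem_antidiagonal] at hmem
      have e0 : p 0 + q 0 = a := by
        have := DFunLike.congr_fun hmem (0 : Fin 2)
        simpa [sab0] using this
      simp only [Finset.mem_range]
      omega
    · intro j hj
      rw [Finset.mem_range] at hj
      rw [Finset.HasAntidiagonal.mem_antidiagonal]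
      rw [← Finsupp.single_add]
      have : j + (a - j) = a := by omega
      rw [this]
      simp
    · rintro ⟨p, q⟩ hmem
      rw [Finset.HasAntidiagonal.mem_antidiagonal] at hmem
      have e0 : p 0 + q 0 = a := by
        have := DFunLike.congr_fun hmem (0 : Fin 2)
        simpa [sab0] using this
      have e1 : p 1 + q 1 = 0 := by
        have := DFunLike.congr_fun hmem (1 : Fin 2)
        simpa [sab1] using this
      have hp : p = Finsupp.single 0 (p 0) := fin2_single0 p (by omega)
      have hq : q = Finsupp.single 0 (q 0) := fin2_single0 q (by omega)
      have : a - p 0 = q 0 := by omega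
      rw [Prod.mk.injEq]
      exact ⟨hp.symm, by rw [this]; exact hq.symm⟩
    · intro j hj
      simp
    · rintro ⟨p, q⟩ hmem
      rw [Finset.HasAntidiagonal.mem_antidiagonal] at hmem
      have e0 : p 0 + q 0 = a := by
        have := DFunLike.congr_fun hmem (0 : Fin 2)
        simpa [sab0] using this
      have e1 : p 1 + q 1 = 0 := by
        have := DFunLike.congr_fun hmem (1 : Fin 2)
        simpa [sab1] using this
      simp only [MvPowerSeries.coeff_apply, inU]
      rw [if_pos (by omega), if_pos (by omega)]
      have : q 0 = a - p 0 := by omega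
      rw [this]
  · rw [if_neg hb]
    apply Finset.sum_eq_zero
    rintro ⟨p, q⟩ hmem
    rw [Finset.HasAntidiagonal.mem_antidiagonal] at hmem
    have e1 : p 1 + q 1 = b := by
      have := DFunLike.congr_fun hmem (1 : Fin 2)
      simpa [sab1] using this
    simp only [MvPowerSeries.coeff_apply, inU]
    by_cases h1 : p 1 = 0
    · rw [if_neg (show ¬ q 1 = 0 by omega), mul_zero]
    · rw [if_neg h1, zero_mul]

noncomputable def gg {A : Type*} [Ring A] (c : ℤ) (H : ℕ → ℕ → A) (a s : ℕ) : A :=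
  ∑ b ∈ Finset.range (s+1), ww c s b • H a b

lemma gg_shift {A : Type*} [Ring A] (c : ℤ) (H : ℕ → ℕ → A)
    (h0 : ∀ a, H a 0 = 0) (k s : ℕ) :
    ∑ b ∈ Finset.range (s+1), ww c s b • H k (b+1)
      = gg c H k (s+1) - c • gg c H k s := by
  have hgs1 : gg c H k (s+1) = ∑ b ∈ Finset.range (s+1), ww c (s+1) (b+1) • H k (b+1) := by
    unfold gg
    rw [Finset.sum_range_succ', h0, smul_zero, add_zero]
  have hgs0 : gg c H k s = ∑ b ∈ Finset.range (s+1), ww c s (b+1) • H k (b+1) := by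
    rw [Finset.sum_range_succ, ww_gt c s (s+1) (by omega), zero_smul, add_zero]
    unfold gg
    rw [Finset.sum_range_succ', h0, smul_zero, add_zero]
  rw [hgs1, hgs0, Finset.smul_sum, ← Finset.sum_sub_distrib]
  refine Finset.sum_congr rfl fun b hb => ?_
  rw [ww_succ c s (b+1) (by omega) (by have := Finset.mem_range.mp hb; omega)]
  have e : b + 1 - 1 = b := rfl
  rw [e, add_smul, mul_smul, add_sub_cancel_right]

lemma master {A : Type*} [Ring A] (c : ℤ) (H : ℕ → ℕ → A)
    (h0 : ∀ a, H a 0 = 0) (h0' : ∀ b, H 0 b = 0) (N : ℕ) :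
    ∑ k ∈ Finset.range (N+1), ∑ b ∈ Finset.range (N-k+1),
        ww c (N-k) b • (H (k+1) b - H k (b+1))
      = c • ∑ k ∈ Finset.range (N+1), ∑ b ∈ Finset.range (N-k+1), ww c (N-k) b • H k b := by
  have claim1 : ∑ k ∈ Finset.range (N+1), gg c H (k+1) (N-k)
      = ∑ k ∈ Finset.range (N+1), gg c H k (N-k+1) := by
    have h1 := Finset.sum_range_succ' (fun k => gg c H k (N+1-k)) (N+1)
    have h2 := Finset.sum_range_succ (fun k => gg c H k (N+1-k)) (N+1)
    have e1 : ∀ k, N + 1 - (k + 1) = N - k := fun k => by omega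
    have hz1 : gg c H 0 (N+1-0) = 0 := by
      unfold gg
      refine Finset.sum_eq_zero fun b hb => by rw [h0', smul_zero]
    have hz2 : gg c H (N+1) (N+1-(N+1)) = 0 := by
      have e : N + 1 - (N + 1) = 0 := by omega
      rw [e]
      unfold gg
      rw [Finset.sum_range_one, h0, smul_zero]
    simp only [e1] at h1
    rw [hz1, add_zero] at h1
    rw [hz2, add_zero] at h2
    rw [← h1, h2]
    refine Finset.sum_congr rfl fun k hk => ?_
    have : N + 1 - k = N - k + 1 := by
      have := Finset.mem_range.mp hk; omega
    rw [this]
  calc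
    ∑ k ∈ Finset.range (N+1), ∑ b ∈ Finset.range (N-k+1),
        ww c (N-k) b • (H (k+1) b - H k (b+1))
      = ∑ k ∈ Finset.range (N+1),
          (gg c H (k+1) (N-k) - (gg c H k (N-k+1) - c • gg c H k (N-k))) := by
        refine Finset.sum_congr rfl fun k hk => ?_
        rw [← gg_shift c H h0 k (N-k)]
        unfold gg
        rw [← Finset.sum_sub_distrib]
        refine Finset.sum_congr rfl fun b hb => ?_
        rw [smul_sub]
    _ = c • ∑ k ∈ Finset.range (N+1), ∑ b ∈ Finset.range (N-k+1), ww c (N-k) b • H k b := by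
        rw [Finset.smul_sum]
        rw [Finset.sum_sub_distrib, claim1, Finset.sum_sub_distrib, sub_sub_cancel]
        exact Finset.sum_congr rfl fun k hk => rfl

lemma main_lemma {A : Type*} [Ring A] (c : ℤ) (hc : c * c = 1)
    (d e : ℕ → A) (hd0 : d 0 = 1) (he0 : e 0 = 0)
    (hrel : ∀ a b : ℕ,
      ((d (a+1) * e b - e b * d (a+1)) - (d a * e (b+1) - e (b+1) * d a)) =
      c • (d a * e b - (if b = 0 then ∑ j ∈ Finset.range (a+1), d j * e (a-j) else 0))) :
    PowerSeries.mk (shf c e) * PowerSeries.mk d = PowerSeries.mk d * PowerSeries.mk e := by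
  have cancel : ∀ x y : A, c • x = c • y → x = y := by
    intro x y h
    have h2 : (c * c) • x = (c * c) • y := by
      rw [mul_smul, mul_smul, h]
    rwa [hc, one_smul, one_smul] at h2
  ext N
  rw [PowerSeries.coeff_mul, PowerSeries.coeff_mul]
  simp only [PowerSeries.coeff_mk]
  rw [Finset.Nat.sum_antidiagonal_eq_sum_range_succ_mk,
    Finset.Nat.sum_antidiagonal_eq_sum_range_succ_mk]
  -- master identity, beta-reduced
  have hM : ∑ k ∈ Finset.range (N+1), ∑ b ∈ Finset.range (N-k+1),
        ww c (N-k) b • ((d (k+1) * e b - e b * d (k+1)) - (d k * e (b+1) - e (b+1) * d k))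
      = c • ∑ k ∈ Finset.range (N+1), ∑ b ∈ Finset.range (N-k+1),
        ww c (N-k) b • (d k * e b - e b * d k) :=
    master c (fun a b => d a * e b - e b * d a)
      (fun a => by simp [he0]) (fun b => by simp [hd0]) N
  have hL : ∑ k ∈ Finset.range (N+1), ∑ b ∈ Finset.range (N-k+1),
        ww c (N-k) b • ((d (k+1) * e b - e b * d (k+1)) - (d k * e (b+1) - e (b+1) * d k))
      = c • ∑ k ∈ Finset.range (N+1), ∑ b ∈ Finset.range (N-k+1),
        ww c (N-k) b • (d k * e b -
          (if b = 0 then ∑ j ∈ Finset.range (k+1), d j * e (k-j) else 0)) := by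
    rw [Finset.smul_sum]
    refine Finset.sum_congr rfl fun k hk => ?_
    rw [Finset.smul_sum]
    refine Finset.sum_congr rfl fun b hb => ?_
    rw [hrel k b, smul_comm]
  have key := cancel _ _ (hL.symm.trans hM)
  have expand : ∀ Y : ℕ → ℕ → A,
      ∑ k ∈ Finset.range (N+1), ∑ b ∈ Finset.range (N-k+1),
          ww c (N-k) b • (d k * e b - Y k b)
        = (∑ k ∈ Finset.range (N+1), ∑ b ∈ Finset.range (N-k+1),
            ww c (N-k) b • (d k * e b))
          - ∑ k ∈ Finset.range (N+1), ∑ b ∈ Finset.range (N-k+1),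
            ww c (N-k) b • Y k b := by
    intro Y
    rw [← Finset.sum_sub_distrib]
    refine Finset.sum_congr rfl fun k hk => ?_
    rw [← Finset.sum_sub_distrib]
    refine Finset.sum_congr rfl fun b hb => ?_
    rw [smul_sub]
  rw [expand, expand] at key
  have key2 : ∑ k ∈ Finset.range (N+1), ∑ b ∈ Finset.range (N-k+1),
        ww c (N-k) b • ((if b = 0 then ∑ j ∈ Finset.range (k+1), d j * e (k-j) else 0))
      = ∑ k ∈ Finset.range (N+1), ∑ b ∈ Finset.range (N-k+1), ww c (N-k) b • (e b * d k) :=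
    sub_right_injective key
  -- compute the left side of key2
  have hG : ∑ k ∈ Finset.range (N+1), ∑ b ∈ Finset.range (N-k+1),
        ww c (N-k) b • ((if b = 0 then ∑ j ∈ Finset.range (k+1), d j * e (k-j) else 0))
      = ∑ j ∈ Finset.range (N+1), d j * e (N-j) := by
    have step1 : ∀ k ∈ Finset.range (N+1),
        ∑ b ∈ Finset.range (N-k+1),
          ww c (N-k) b • ((if b = 0 then ∑ j ∈ Finset.range (k+1), d j * e (k-j) else 0))
        = ww c (N-k) 0 • ∑ j ∈ Finset.range (k+1), d j * e (k-j) := by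
      intro k hk
      rw [Finset.sum_eq_single_of_mem 0 (Finset.mem_range.mpr (by omega))]
      · rw [if_pos rfl]
      · intro b hb hbne
        rw [if_neg hbne, smul_zero]
    rw [Finset.sum_congr rfl step1]
    rw [Finset.sum_eq_single_of_mem N (Finset.mem_range.mpr (by omega))]
    · have e0 : N - N = 0 := by omega
      rw [e0, ww_diag, one_smul]
    · intro k hk hkne
      rw [ww_zero c (N-k) (by have := Finset.mem_range.mp hk; omega), zero_smul]
  -- now the goal
  calc
    ∑ k ∈ Finset.range (N+1), shf c e k * d (N-k)
      = ∑ k ∈ Finset.range (N+1), shf c e (N-k) * d k := by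
        rw [← Finset.sum_range_reflect]
        refine Finset.sum_congr rfl fun k hk => ?_
        have h1 : N + 1 - 1 - k = N - k := by omega
        have h2 : N - (N - k) = k := by have := Finset.mem_range.mp hk; omega
        rw [h1, h2]
    _ = ∑ k ∈ Finset.range (N+1), ∑ b ∈ Finset.range (N-k+1),
          ww c (N-k) b • (e b * d k) := by
        refine Finset.sum_congr rfl fun k hk => ?_
        rw [shf_eq, Finset.sum_mul]
        exact Finset.sum_congr rfl fun b hb => smul_mul_assoc _ _ _
    _ = ∑ j ∈ Finset.range (N+1), d j * e (N-j) := by rw [← key2, hG]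

lemma cf2_sub {A : Type*} [Ring A] (X Y : MvPowerSeries (Fin 2) A) (a b : ℕ) :
    cf2 (X - Y) a b = cf2 X a b - cf2 Y a b := by
  unfold cf2
  exact map_sub (MvPowerSeries.coeff (Finsupp.single 0 a + Finsupp.single 1 b)) X Y

lemma hrel_convert {A : Type*} [Ring A] (c : ℤ) (d e : ℕ → A)
    (h : ∀ a b : ℕ,
      cf2 (inU d * inV e - inV e * inU d) (a+1) b -
        cf2 (inU d * inV e - inV e * inU d) a (b+1) =
      c • cf2 (inU d * (inV e - inU e)) a b) :
    ∀ a b : ℕ,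
      ((d (a+1) * e b - e b * d (a+1)) - (d a * e (b+1) - e (b+1) * d a)) =
      c • (d a * e b - (if b = 0 then ∑ j ∈ Finset.range (a+1), d j * e (a-j) else 0)) := by
  intro a b
  have h1 := h a b
  rw [cf2_sub, cf2_sub, cf2_UV, cf2_UV, cf2_VU, cf2_VU, mul_sub, cf2_sub, cf2_UV, cf2_UU] at h1
  exact h1


/-- in Y_{m|n}[[u^{-1}]] the relations
e_i(u − (−1)^{|i|}) d_i(u) = d_i(u) e_i(u)  and
e_i(u + (−1)^{|i+1|}) d_{i+1}(u) = d_{i+1}(u) e_i(u)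
hold for all 1 ≤ i ≤ m+n−1, given the commutation relations
(u−v)[d_i(u), e_j(v)] = (−1)^{|i|}(δ_{ij} − δ_{i,j+1}) d_i(u)(e_j(v) − e_j(u))
specialized to (i,j) = (i,i) and (i+1,i) (expressed coefficientwise). -/
theorem e_shift_d_relations
    (k : Type*) [Field k] (p : ℕ) [CharP k p] (hp : 0 < p)
    (m n : ℕ) (A : Type*) [Ring A] [Algebra k A]
    (i : ℕ) (hi1 : 1 ≤ i) (hi2 : i ≤ m + n - 1)
    (d dnext e : ℕ → A) (hd0 : d 0 = 1) (hdnext0 : dnext 0 = 1) (he0 : e 0 = 0)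
    -- (u−v)[d_i(u), e_i(v)] = (−1)^{|i|} d_i(u)(e_i(v) − e_i(u))
    (hrel1 : ∀ a b : ℕ,
      cf2 (inU d * inV e - inV e * inU d) (a+1) b -
        cf2 (inU d * inV e - inV e * inU d) a (b+1) =
      ((-1 : ℤ) ^ pnat m i) • cf2 (inU d * (inV e - inU e)) a b)
    -- (u−v)[d_{i+1}(u), e_i(v)] = −(−1)^{|i+1|} d_{i+1}(u)(e_i(v) − e_i(u))
    (hrel2 : ∀ a b : ℕ,
      cf2 (inU dnext * inV e - inV e * inU dnext) (a+1) b -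
        cf2 (inU dnext * inV e - inV e * inU dnext) a (b+1) =
      -((-1 : ℤ) ^ pnat m (i+1)) • cf2 (inU dnext * (inV e - inU e)) a b) :
    PowerSeries.mk (shf ((-1 : ℤ) ^ pnat m i) e) * PowerSeries.mk d =
        PowerSeries.mk d * PowerSeries.mk e ∧
    PowerSeries.mk (shf (-((-1 : ℤ) ^ pnat m (i+1))) e) * PowerSeries.mk dnext =
        PowerSeries.mk dnext * PowerSeries.mk e := by
  have hc1 : ((-1 : ℤ) ^ pnat m i) * ((-1 : ℤ) ^ pnat m i) = 1 := by
    rw [← pow_add]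
    exact Even.neg_one_pow ⟨pnat m i, rfl⟩
  have hc2 : (-((-1 : ℤ) ^ pnat m (i+1))) * (-((-1 : ℤ) ^ pnat m (i+1))) = 1 := by
    rw [neg_mul_neg, ← pow_add]
    exact Even.neg_one_pow ⟨pnat m (i+1), rfl⟩
  constructor
  · exact main_lemma _ hc1 d e hd0 he0 (hrel_convert _ d e hrel1)
  · exact main_lemma _ hc2 dnext e hdnext0 he0 (hrel_convert _ dnext e hrel2)
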